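/- Let λ ∈ ℂ and n ≥ 1, and let F be the companion matrix of (x−λ)^n. With respect to the involution of complex conjugation, F is a *cosquare (i.e., F = A^{−*}A for some nonsingular complex A) if and only if |λ| = 1. -/

import Mathlib

open Matrix Polynomial

/-- The companion matrix of a monic polynomial `q = xⁿ + c₁xⁿ⁻¹ + ⋯ + cₙ`, as an
`n × n` matrix: `1`'s on the first subdiagonal, last column `(-cₙ, …, -c₁)ᵀ`,
and all other entries `0`. -/
def companionMatrix (n : ℕ) (q : Polynomial ℂ) : Matrix (Fin n) (Fin n) ℂ :=
  Matrix.of fun i j =>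
    if (j : ℕ) = n - 1 then -q.coeff i
    else if (i : ℕ) = (j : ℕ) + 1 then 1 else 0

open Finset fwdDiff


-- step 1: forward-difference kills low-degree polynomials
private lemma fd_zero_of_degree_lt : ∀ (n : ℕ) (p : ℂ[X]), p.degree < n →
    ∀ y : ℤ, (fwdDiff (1:ℤ))^[n] (fun k : ℤ => p.eval (k:ℂ)) y = 0 := by
  intro n
  induction n with
  | zero =>
    intro p hp y
    have hp0 : p = 0 := Polynomial.degree_eq_bot.mp (Nat.WithBot.lt_zero_iff.mp (by simpa using hp))
    simp [hp0]
  | succ n ih =>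
    intro p hp y
    rw [Function.iterate_succ_apply]
    have hstep : ((fwdDiff (1:ℤ)) fun k : ℤ => p.eval (k:ℂ))
        = fun k : ℤ => (p.comp (X + C 1) - p).eval (k:ℂ) := by
      funext m
      simp only [fwdDiff, eval_sub, eval_comp, eval_add, eval_X, eval_C]
      push_cast
      ring_nf
    rw [hstep]
    apply ih
    rcases eq_or_ne (p.comp (X + C 1) - p) 0 with h0 | h0
    · rw [h0, Polynomial.degree_zero]; exact WithBot.bot_lt_coe n
    · have hp0 : p ≠ 0 := by rintro rfl; simp at h0
      have hple : p.degree ≤ (n : WithBot ℕ) := by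
        rw [Polynomial.degree_eq_natDegree hp0] at hp ⊢
        exact_mod_cast Nat.lt_succ_iff.mp (by exact_mod_cast hp)
      have hcompne : p.comp (X + C 1) ≠ 0 := by
        intro h
        apply hp0
        have h2 := congrArg (fun q : ℂ[X] => q.comp (X - C 1)) h
        simpa [Polynomial.comp_assoc, Polynomial.add_comp, Polynomial.sub_comp] using h2
      have hnd : (p.comp (X + C 1)).natDegree = p.natDegree := by
        rw [Polynomial.natDegree_comp, Polynomial.natDegree_X_add_C, mul_one]
      have hdeg : (p.comp (X + C 1)).degree = p.degree := by
        rw [Polynomial.degree_eq_natDegree hcompne, Polynomial.degree_eq_natDegree hp0, hnd]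
      have hlc : (p.comp (X + C 1)).leadingCoeff = p.leadingCoeff := by
        rw [Polynomial.leadingCoeff_comp (by rw [Polynomial.natDegree_X_add_C]; exact one_ne_zero)]
        rw [Polynomial.leadingCoeff_X_add_C, one_pow, mul_one]
      calc (p.comp (X + C 1) - p).degree < (p.comp (X + C 1)).degree :=
            Polynomial.degree_sub_lt hdeg hcompne hlc
        _ ≤ (n : WithBot ℕ) := by rw [hdeg]; exact hple

private lemma GK (n : ℕ) (p : ℂ[X]) (hdeg : p.degree < n) :
    ∑ k ∈ Finset.range (n+1), (-1:ℂ)^(n-k) * (n.choose k : ℂ) * p.eval (k:ℂ) = 0 := by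
  have hfd : ∀ y : ℤ, (fwdDiff (1:ℤ))^[n] (fun k : ℤ => p.eval (k:ℂ)) y = 0 := by
    exact fun y => fd_zero_of_degree_lt n p hdeg y
  have h := fwdDiff_iter_eq_sum_shift (1:ℤ) (fun m : ℤ => p.eval (m:ℂ)) n 0
  rw [hfd 0] at h
  have h2 : (0:ℂ) = ∑ k ∈ Finset.range (n+1), (-1:ℂ)^(n-k) * (n.choose k : ℂ) * p.eval (k:ℂ) := by
    rw [h]
    apply Finset.sum_congr rfl
    intro k _
    rw [zsmul_eq_mul]
    push_cast
    ring_nf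
    norm_cast
  exact h2.symm

noncomputable def bb (n : ℕ) (m : ℤ) : ℂ := ∏ t ∈ Finset.range (n-1), ((m : ℂ) - t)

noncomputable def cc (lam : ℂ) (n : ℕ) (m : ℤ) : ℂ := bb n m * lam ^ (m - ((n:ℤ)-1))

-- degree of products of n-1 linear factors is < n
private lemma deg_prod_lt (n : ℕ) (hn : 1 ≤ n) (f : ℕ → ℂ[X]) (hf : ∀ t, (f t).degree = 1) :
    (∏ t ∈ Finset.range (n-1), f t).degree < n := by
  rw [Polynomial.degree_prod]
  simp only [hf]
  rw [Finset.sum_const, Finset.card_range, nsmul_eq_mul, mul_one]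
  exact_mod_cast Nat.sub_lt hn one_pos

private lemma KEY1 (n : ℕ) (hn : 1 ≤ n) (l : ℤ) :
    ∑ k ∈ Finset.range (n+1), (-1:ℂ)^(n-k) * (n.choose k : ℂ) * bb n (l - k) = 0 := by
  have h := GK n (∏ t ∈ Finset.range (n-1), (Polynomial.C ((l:ℂ) - t) - X))
    (deg_prod_lt n hn _ (fun t => by
      rw [show Polynomial.C ((l:ℂ) - t) - X = -(X - Polynomial.C ((l:ℂ) - t)) by ring,
        Polynomial.degree_neg, Polynomial.degree_X_sub_C]))
  rw [← h]
  apply Finset.sum_congr rfl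
  intro k _
  congr 1
  rw [Polynomial.eval_prod, bb]
  apply Finset.prod_congr rfl
  intro t _
  simp only [Polynomial.eval_sub, Polynomial.eval_C, Polynomial.eval_X]
  push_cast
  ring

private lemma KEY2 (n : ℕ) (hn : 1 ≤ n) (l : ℤ) :
    ∑ k ∈ Finset.range (n+1), (-1:ℂ)^(n-k) * (n.choose k : ℂ) * bb n (k - l) = 0 := by
  have h := GK n (∏ t ∈ Finset.range (n-1), (X - Polynomial.C ((l:ℂ) + t)))
    (deg_prod_lt n hn _ (fun t => Polynomial.degree_X_sub_C _))
  rw [← h]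
  apply Finset.sum_congr rfl
  intro k _
  congr 1
  rw [Polynomial.eval_prod, bb]
  apply Finset.prod_congr rfl
  intro t _
  simp only [Polynomial.eval_sub, Polynomial.eval_C, Polynomial.eval_X, Polynomial.eval_add]
  push_cast
  ring

noncomputable def Smat (lam : ℂ) (n : ℕ) : Matrix (Fin n) (Fin n) ℂ :=
  Matrix.of fun i j => cc lam n (((j:ℕ):ℤ) - ((i:ℕ):ℤ))

private lemma Fentry (lam : ℂ) (n : ℕ) (l j : Fin n) :
    companionMatrix n ((X - C lam)^n) l j =
      if (j:ℕ) = n-1 then -((-lam)^(n-(l:ℕ)) * ((n.choose (l:ℕ)) : ℂ))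
      else if (l:ℕ) = (j:ℕ)+1 then 1 else 0 := by
  have hx : (X - C lam : ℂ[X]) = X + C (-lam) := by rw [map_neg]; ring
  simp only [companionMatrix, Matrix.of_apply, hx, Polynomial.coeff_X_add_C_pow]

private lemma I1 (lam : ℂ) (hlam : lam ≠ 0) (n : ℕ) (hn : 1 ≤ n) (i : ℤ) :
    ∑ k ∈ Finset.range (n+1), cc lam n ((k:ℤ) - i) * ((-lam)^(n-k) * ((n.choose k) : ℂ)) = 0 := by
  have step : ∀ k ∈ Finset.range (n+1),
      cc lam n ((k:ℤ) - i) * ((-lam)^(n-k) * ((n.choose k) : ℂ))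
      = ((-1:ℂ)^(n-k) * (n.choose k : ℂ) * bb n ((k:ℤ) - i)) * lam ^ (1 - i) := by
    intro k hk
    have hkn : k ≤ n := Nat.lt_succ_iff.mp (Finset.mem_range.mp hk)
    have e1 : ((-lam):ℂ)^(n-k) = (-1:ℂ)^(n-k) * lam ^ ((n:ℤ)-(k:ℤ)) := by
      rw [neg_pow]
      congr 1
      rw [← zpow_natCast lam (n-k), Nat.cast_sub hkn]
    have e2 : lam ^ ((k:ℤ) - i - ((n:ℤ)-1)) * lam ^ ((n:ℤ) - (k:ℤ)) = lam ^ (1 - i) := by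
      rw [← zpow_add₀ hlam]
      congr 1
      ring
    rw [cc, e1, ← e2]
    ring
  rw [Finset.sum_congr rfl step, ← Finset.sum_mul, KEY2 n hn i, zero_mul]

private lemma I2 (lam : ℂ) (hlam : lam ≠ 0) (hconj : (starRingEnd ℂ) lam = lam⁻¹)
    (n : ℕ) (hn : 1 ≤ n) (j : ℤ) :
    ∑ k ∈ Finset.range (n+1),
      (starRingEnd ℂ) ((-lam)^(n-k) * ((n.choose k) : ℂ)) * cc lam n (j - (k:ℤ)) = 0 := by
  have step : ∀ k ∈ Finset.range (n+1),
      (starRingEnd ℂ) ((-lam)^(n-k) * ((n.choose k) : ℂ)) * cc lam n (j - (k:ℤ))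
      = ((-1:ℂ)^(n-k) * (n.choose k : ℂ) * bb n (j - (k:ℤ))) * lam ^ (j + 1 - 2*(n:ℤ)) := by
    intro k hk
    have hkn : k ≤ n := Nat.lt_succ_iff.mp (Finset.mem_range.mp hk)
    have e1 : (starRingEnd ℂ) ((-lam)^(n-k)) = (-1:ℂ)^(n-k) * lam ^ ((k:ℤ)-(n:ℤ)) := by
      rw [map_pow, map_neg, hconj, neg_pow]
      congr 1
      rw [← zpow_natCast lam⁻¹ (n-k), _root_.inv_zpow, ← _root_.zpow_neg]
      congr 1
      rw [Nat.cast_sub hkn]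
      ring
    have e2 : lam ^ ((k:ℤ)-(n:ℤ)) * lam ^ (j - (k:ℤ) - ((n:ℤ)-1)) = lam ^ (j + 1 - 2*(n:ℤ)) := by
      rw [← zpow_add₀ hlam]
      congr 1
      ring
    rw [_root_.map_mul, e1, map_natCast, cc, ← e2]
    ring
  rw [Finset.sum_congr rfl step, ← Finset.sum_mul, KEY1 n hn j, zero_mul]

private lemma hSF (lam : ℂ) (hlam : lam ≠ 0) (n : ℕ) (hn : 1 ≤ n) (k j : Fin n) :
    (Smat lam n * companionMatrix n ((X - C lam)^n)) k j
      = cc lam n (((j:ℕ):ℤ) + 1 - ((k:ℕ):ℤ)) := by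
  rw [Matrix.mul_apply]
  by_cases hj : (j:ℕ) = n-1
  · have e0 : ∀ l : Fin n, Smat lam n k l * companionMatrix n ((X - C lam)^n) l j
        = -(cc lam n (((l:ℕ):ℤ) - ((k:ℕ):ℤ)) * ((-lam)^(n-(l:ℕ)) * ((n.choose (l:ℕ)):ℂ))) := by
      intro l
      rw [Fentry lam n l j, if_pos hj, Smat]
      simp only [Matrix.of_apply]
      ring
    rw [Finset.sum_congr rfl (fun l _ => e0 l),
      Fin.sum_univ_eq_sum_range
        (fun m => -(cc lam n ((m:ℤ) - ((k:ℕ):ℤ)) * ((-lam)^(n-m) * ((n.choose m):ℂ))))]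
    have hsum := I1 lam hlam n hn ((k:ℕ):ℤ)
    rw [Finset.sum_range_succ] at hsum
    have hlast : cc lam n (((n:ℕ):ℤ) - ((k:ℕ):ℤ)) * ((-lam)^(n-n) * ((n.choose n) : ℂ))
        = cc lam n ((n:ℤ) - ((k:ℕ):ℤ)) := by simp
    rw [hlast] at hsum
    rw [Finset.sum_neg_distrib]
    have : ∑ l ∈ Finset.range n, cc lam n ((l:ℤ) - ((k:ℕ):ℤ)) * ((-lam)^(n-l) * ((n.choose l):ℂ))
        = -cc lam n ((n:ℤ) - ((k:ℕ):ℤ)) := by linear_combination hsum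
    rw [this, neg_neg]
    congr 1
    omega
  · have hjlt : (j:ℕ)+1 < n := by have := j.isLt; omega
    set l0 : Fin n := ⟨(j:ℕ)+1, hjlt⟩ with hl0
    have e0 : ∀ l : Fin n, Smat lam n k l * companionMatrix n ((X - C lam)^n) l j
        = if l = l0 then cc lam n (((l:ℕ):ℤ) - ((k:ℕ):ℤ)) else 0 := by
      intro l
      rw [Fentry lam n l j, if_neg hj, Smat]
      simp only [Matrix.of_apply]
      by_cases hl : (l:ℕ) = (j:ℕ)+1
      · rw [if_pos hl, if_pos (by exact Fin.ext hl), mul_one]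
      · rw [if_neg hl, if_neg (by intro h; exact hl (by rw [h]) ), mul_zero]
    rw [Finset.sum_congr rfl (fun l _ => e0 l), Finset.sum_ite_eq' Finset.univ l0 _,
      if_pos (Finset.mem_univ _)]
    congr 1

private lemma hFSF (lam : ℂ) (hlam : lam ≠ 0) (hconj : (starRingEnd ℂ) lam = lam⁻¹)
    (n : ℕ) (hn : 1 ≤ n) :
    (companionMatrix n ((X - C lam)^n))ᴴ * (Smat lam n * companionMatrix n ((X - C lam)^n))
      = Smat lam n := by
  ext i j
  rw [Matrix.mul_apply]
  have hT : ∀ k : Fin n, (Smat lam n * companionMatrix n ((X - C lam)^n)) k j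
      = cc lam n (((j:ℕ):ℤ) + 1 - ((k:ℕ):ℤ)) := fun k => hSF lam hlam n hn k j
  by_cases hi : (i:ℕ) = n-1
  · have e0 : ∀ k : Fin n,
        (companionMatrix n ((X - C lam)^n))ᴴ i k
          * (Smat lam n * companionMatrix n ((X - C lam)^n)) k j
        = -((starRingEnd ℂ) ((-lam)^(n-(k:ℕ)) * ((n.choose (k:ℕ)):ℂ))
            * cc lam n ((((j:ℕ):ℤ) + 1) - ((k:ℕ):ℤ))) := by
      intro k
      rw [hT k, Matrix.conjTranspose_apply, Fentry lam n k i, if_pos hi]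
      rw [star_neg]
      rw [show (star ((-lam)^(n-(k:ℕ)) * ((n.choose (k:ℕ)):ℂ)))
          = (starRingEnd ℂ) ((-lam)^(n-(k:ℕ)) * ((n.choose (k:ℕ)):ℂ)) from rfl]
      ring
    rw [Finset.sum_congr rfl (fun k _ => e0 k),
      Fin.sum_univ_eq_sum_range
        (fun m => -((starRingEnd ℂ) ((-lam)^(n-m) * ((n.choose m):ℂ))
            * cc lam n ((((j:ℕ):ℤ) + 1) - (m:ℤ))))]
    have hsum := I2 lam hlam hconj n hn (((j:ℕ):ℤ) + 1)
    rw [Finset.sum_range_succ] at hsum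
    have hlast : (starRingEnd ℂ) ((-lam)^(n-n) * ((n.choose n) : ℂ))
        * cc lam n ((((j:ℕ):ℤ) + 1) - ((n:ℕ):ℤ))
        = cc lam n ((((j:ℕ):ℤ) + 1) - (n:ℤ)) := by simp
    rw [hlast] at hsum
    rw [Finset.sum_neg_distrib]
    have : ∑ m ∈ Finset.range n, (starRingEnd ℂ) ((-lam)^(n-m) * ((n.choose m):ℂ))
          * cc lam n ((((j:ℕ):ℤ) + 1) - (m:ℤ))
        = -cc lam n ((((j:ℕ):ℤ) + 1) - (n:ℤ)) := by linear_combination hsum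
    rw [this, neg_neg, Smat]
    simp only [Matrix.of_apply]
    congr 1
    omega
  · have hilt : (i:ℕ)+1 < n := by have := i.isLt; omega
    set k0 : Fin n := ⟨(i:ℕ)+1, hilt⟩ with hk0
    have e0 : ∀ k : Fin n,
        (companionMatrix n ((X - C lam)^n))ᴴ i k
          * (Smat lam n * companionMatrix n ((X - C lam)^n)) k j
        = if k = k0 then cc lam n ((((j:ℕ):ℤ) + 1) - ((k:ℕ):ℤ)) else 0 := by
      intro k
      rw [hT k, Matrix.conjTranspose_apply, Fentry lam n k i, if_neg hi]
      by_cases hk : (k:ℕ) = (i:ℕ)+1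
      · rw [if_pos hk, if_pos (by exact Fin.ext hk), star_one, one_mul]
      · rw [if_neg hk, if_neg (by intro h; exact hk (by rw [h])), star_zero, zero_mul]
    rw [Finset.sum_congr rfl (fun k _ => e0 k), Finset.sum_ite_eq' Finset.univ k0 _,
      if_pos (Finset.mem_univ _), Smat]
    simp only [Matrix.of_apply, hk0]
    congr 1
    push_cast
    ring

private lemma bb_zero (n : ℕ) (m : ℤ) (h0 : 0 ≤ m) (h1 : m < (n:ℤ)-1) : bb n m = 0 := by
  rw [bb]
  apply Finset.prod_eq_zero (i := m.toNat) (by rw [Finset.mem_range]; omega)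
  have : ((m.toNat : ℕ) : ℂ) = (m : ℂ) := by
    rw [show ((m.toNat : ℕ) : ℂ) = ((m.toNat : ℤ) : ℂ) by push_cast; ring]
    congr 1
    omega
  rw [this, sub_self]

private lemma bb_ne_zero (n : ℕ) (m : ℤ) (h : m < 0 ∨ (n:ℤ)-1 ≤ m) : bb n m ≠ 0 := by
  rw [bb]
  apply Finset.prod_ne_zero_iff.mpr
  intro t ht
  rw [Finset.mem_range] at ht
  rw [show ((m:ℂ) - t) = ((m - t : ℤ) : ℂ) by push_cast; ring]
  rw [Int.cast_ne_zero]
  omega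

private lemma cc_zero (lam : ℂ) (n : ℕ) (m : ℤ) (h0 : 0 ≤ m) (h1 : m < (n:ℤ)-1) :
    cc lam n m = 0 := by rw [cc, bb_zero n m h0 h1, zero_mul]

private lemma cc_ne_zero (lam : ℂ) (hlam : lam ≠ 0) (n : ℕ) (m : ℤ)
    (h : m < 0 ∨ (n:ℤ)-1 ≤ m) : cc lam n m ≠ 0 :=
  mul_ne_zero (bb_ne_zero n m h) (zpow_ne_zero _ hlam)

private lemma detS (lam : ℂ) (hlam : lam ≠ 0) (n : ℕ) (hn : 1 ≤ n) :
    (Smat lam n).det ≠ 0 := by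
  obtain ⟨m, rfl⟩ : ∃ m, n = m+1 := ⟨n-1, by omega⟩
  rw [Matrix.det_succ_row_zero]
  rw [Finset.sum_eq_single (Fin.last m)]
  · -- main term nonzero
    apply mul_ne_zero (mul_ne_zero (by apply pow_ne_zero; norm_num) ?_) ?_
    · -- S 0 last ≠ 0
      show Smat lam (m+1) 0 (Fin.last m) ≠ 0
      rw [Smat]
      simp only [Matrix.of_apply, Fin.val_last, Fin.val_zero]
      apply cc_ne_zero lam hlam
      right
      push_cast
      omega
    · -- det of minor ≠ 0
      have htri : ((Smat lam (m+1)).submatrix Fin.succ (Fin.last m).succAbove).BlockTriangular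
          OrderDual.toDual := by
        intro a b hab
        have hab' : a < b := hab
        rw [Matrix.submatrix_apply, Fin.succAbove_last, Smat]
        simp only [Matrix.of_apply, Fin.coe_castSucc, Fin.val_succ]
        apply cc_zero
        · have : (a:ℕ) < (b:ℕ) := hab'
          push_cast
          omega
        · have hb := b.isLt
          push_cast
          omega
      rw [Matrix.det_of_lowerTriangular _ htri]
      apply Finset.prod_ne_zero_iff.mpr
      intro a _
      rw [Matrix.submatrix_apply, Fin.succAbove_last, Smat]
      simp only [Matrix.of_apply, Fin.coe_castSucc, Fin.val_succ]
      have : ((a:ℕ):ℤ) - (((a:ℕ):ℤ) + 1) = -1 := by ring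
      rw [show ((a:ℕ):ℤ) - (((a:ℕ)+1:ℕ):ℤ) = -1 by push_cast; ring]
      exact cc_ne_zero lam hlam _ _ (by left; norm_num)
  · intro b _ hb
    have hb0 : Smat lam (m+1) 0 b = 0 := by
      rw [Smat]
      simp only [Matrix.of_apply, Fin.val_zero]
      apply cc_zero
      · exact Int.natCast_nonneg _
      · have : (b:ℕ) < m := by
          have := b.isLt
          have : (b:ℕ) ≠ m := fun h => hb (Fin.ext (by simp [h]))
          omega
        push_cast
        omega
    rw [hb0, mul_zero, zero_mul]
  · intro h
    exact absurd (Finset.mem_univ _) h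

private lemma circle_infinite : {z : ℂ | ‖z‖ = 1}.Infinite := by
  apply Set.infinite_of_injective_forall_mem
    (f := fun r : ℝ => (1 + (r:ℂ)*Complex.I)/(1 - (r:ℂ)*Complex.I))
  · intro a b h
    have ha : (1:ℂ) - (a:ℂ)*Complex.I ≠ 0 := by
      intro h0
      have := congrArg Complex.re h0
      simp at this
    have hb : (1:ℂ) - (b:ℂ)*Complex.I ≠ 0 := by
      intro h0
      have := congrArg Complex.re h0
      simp at this
    rw [div_eq_div_iff ha hb] at h
    have h2 : ((a:ℂ) - b) * (2*Complex.I) = 0 := by linear_combination h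
    rcases mul_eq_zero.mp h2 with h3 | h3
    · exact_mod_cast sub_eq_zero.mp h3
    · exfalso
      simpa [Complex.I_ne_zero] using h3
  · intro r
    show ‖_‖ = 1
    have key : ∀ s : ℝ, ‖1 + (s:ℂ)*Complex.I‖ = Real.sqrt (1 + s^2) := by
      intro s
      rw [Complex.norm_def, show (1 + (s:ℂ)*Complex.I) = ((1:ℝ):ℂ) + (s:ℝ)*Complex.I by push_cast; ring,
        Complex.normSq_add_mul_I]
      norm_num
    have h2 : (1:ℂ) - (r:ℂ)*Complex.I = 1 + ((-r : ℝ):ℂ)*Complex.I := by push_cast; ring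
    rw [norm_div, key r, h2, key (-r), neg_sq]
    apply div_self
    have : (0:ℝ) < 1 + r^2 := by positivity
    exact Real.sqrt_ne_zero'.mpr this

private lemma eval_charpoly (n : ℕ) (M : Matrix (Fin n) (Fin n) ℂ) (z : ℂ) :
    (Matrix.charpoly M).eval z = (z • (1 : Matrix (Fin n) (Fin n) ℂ) - M).det := by
  rw [Matrix.charpoly]
  have h : (Matrix.charmatrix M).det.eval z
      = ((Matrix.charmatrix M).map (Polynomial.evalRingHom z)).det :=
    (Polynomial.evalRingHom z).map_det (Matrix.charmatrix M)
  rw [h]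
  congr 1
  ext i j
  by_cases hij : i = j
  · subst hij
    rw [Matrix.map_apply, Matrix.charmatrix_apply_eq]
    simp [Matrix.one_apply]
  · rw [Matrix.map_apply, Matrix.charmatrix_apply_ne _ _ _ hij]
    simp [Matrix.one_apply, hij]

private lemma detF (lam : ℂ) (n : ℕ) (hn : 1 ≤ n) :
    (companionMatrix n ((X - C lam)^n)).det = lam ^ n := by
  obtain ⟨m, rfl⟩ : ∃ m, n = m+1 := ⟨n-1, by omega⟩
  rw [Matrix.det_succ_row_zero, Finset.sum_eq_single (Fin.last m)]
  · have h0 : companionMatrix (m+1) ((X - C lam)^(m+1)) 0 (Fin.last m)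
        = -((-lam)^(m+1)) := by
      rw [Fentry, if_pos (by simp)]
      simp
    have h1 : (companionMatrix (m+1) ((X - C lam)^(m+1))).submatrix
        Fin.succ (Fin.last m).succAbove = 1 := by
      ext a b
      rw [Matrix.submatrix_apply, Fin.succAbove_last, Fentry]
      rw [if_neg (by simp only [Fin.coe_castSucc]; have := b.isLt; omega)]
      by_cases hab : a = b
      · subst hab
        rw [if_pos (by simp [Fin.val_succ, Fin.coe_castSucc]), Matrix.one_apply_eq]
      · rw [if_neg (by
            simp only [Fin.val_succ, Fin.coe_castSucc]
            intro h
            exact hab (Fin.ext (by omega))), Matrix.one_apply_ne hab]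
    rw [h0, h1, Matrix.det_one, mul_one, Fin.val_last]
    have h2 : ((-1:ℂ))^m * ((-1:ℂ))^(m+1) = -1 := by
      rw [← pow_add, show m + (m+1) = 2*m+1 by ring, pow_succ, pow_mul]
      norm_num
    calc (-1:ℂ)^m * -((-lam)^(m+1)) = -((-1:ℂ)^m * (-1:ℂ)^(m+1)) * lam^(m+1) := by
          rw [neg_pow]; ring
      _ = lam^(m+1) := by rw [h2]; ring
  · intro b _ hb
    have hb0 : companionMatrix (m+1) ((X - C lam)^(m+1)) 0 b = 0 := by
      rw [Fentry, if_neg (by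
        intro h
        exact hb (Fin.ext (by simpa using h)))]
      rw [if_neg (by simp)]
    rw [hb0, mul_zero, zero_mul]
  · intro h
    exact absurd (Finset.mem_univ _) h

/-- Let `λ ∈ ℂ`, `n ≥ 1`, and let `F` be the companion matrix
of `(x - λ)ⁿ`.  With respect to complex conjugation, `F` is a *cosquare, i.e.
`F = (Aᴴ)⁻¹ A` for some nonsingular complex `A`, if and only if `|λ| = 1`. -/
theorem companion_is_star_cosquare_iff (lam : ℂ) (n : ℕ) (hn : 1 ≤ n) :
    (∃ A : Matrix (Fin n) (Fin n) ℂ, IsUnit A.det ∧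
        companionMatrix n ((X - C lam) ^ n) = (Aᴴ)⁻¹ * A) ↔
      ‖lam‖ = 1 := by
  constructor
  · rintro ⟨A, hA, hFA⟩
    have hA0 : A.det ≠ 0 := hA.ne_zero
    have hdF : lam ^ n = ((Aᴴ)⁻¹ * A).det := by
      rw [← hFA, detF lam n hn]
    rw [Matrix.det_mul, Matrix.det_nonsing_inv, Matrix.det_conjTranspose] at hdF
    have habs : ‖lam‖ ^ n = 1 := by
      have h5 := congrArg norm hdF
      rw [norm_pow, Ring.inverse_eq_inv', norm_mul, norm_inv] at h5
      rw [h5]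
      have h6 : ‖star A.det‖ = ‖A.det‖ := norm_star _
      rw [h6]
      rw [inv_mul_cancel₀ (by simpa using hA0)]
    rcases lt_trichotomy ‖lam‖ 1 with h | h | h
    · exfalso
      have h7 := pow_lt_one₀ (norm_nonneg lam) h (by omega : n ≠ 0)
      rw [habs] at h7
      exact lt_irrefl _ h7
    · exact h
    · exfalso
      have h7 := one_lt_pow₀ h (by omega : n ≠ 0)
      rw [habs] at h7
      exact lt_irrefl _ h7
  · intro habs
    have hlam : lam ≠ 0 := by
      intro h
      rw [h] at habs
      simp at habs
    have hconj : (starRingEnd ℂ) lam = lam⁻¹ := by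
      have h1 : lam * (starRingEnd ℂ) lam = 1 := by
        rw [Complex.mul_conj]
        norm_cast
        rw [Complex.normSq_eq_norm_sq, habs]
        norm_num
      exact (inv_eq_of_mul_eq_one_right h1).symm
    set F := companionMatrix n ((X - C lam)^n) with hF
    set S := Smat lam n with hS
    have hSdet : IsUnit S.det := isUnit_iff_ne_zero.mpr (detS lam hlam n hn)
    set T := Sᴴ * F with hT
    set N0 : Matrix (Fin n) (Fin n) ℂ := -(S⁻¹ * T) with hN0
    have hp : Matrix.charpoly N0 ≠ 0 := (Matrix.charpoly_monic N0).ne_zero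
    have hbad : {z : ℂ | (Matrix.charpoly N0).IsRoot z}.Finite :=
      Polynomial.finite_setOf_isRoot hp
    obtain ⟨z, hz1, hz2⟩ := (circle_infinite.diff hbad).nonempty
    have hz1' : ‖z‖ = 1 := hz1
    obtain ⟨t, ht⟩ := IsAlgClosed.exists_pow_nat_eq z (n := 2) (by norm_num)
    have ht0 : t ≠ 0 := by
      intro h
      rw [h] at ht
      rw [← ht] at hz1'
      simp at hz1'
    have htabs : ‖t‖ = 1 := by
      have h2 : ‖t‖^2 = 1 := by rw [← norm_pow, ht, hz1']
      nlinarith [norm_nonneg t]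
    have htconj : (starRingEnd ℂ) t = t⁻¹ := by
      have h1 : t * (starRingEnd ℂ) t = 1 := by
        rw [Complex.mul_conj]
        norm_cast
        rw [Complex.normSq_eq_norm_sq, htabs]
        norm_num
      exact (inv_eq_of_mul_eq_one_right h1).symm
    have htconj' : (starRingEnd ℂ) t⁻¹ = t := by
      rw [map_inv₀, htconj, inv_inv]
    set A := t • S + t⁻¹ • T with hA
    have hAH : Aᴴ = t⁻¹ • Sᴴ + t • (Fᴴ * S) := by
      rw [hA, Matrix.conjTranspose_add, Matrix.conjTranspose_smul, Matrix.conjTranspose_smul,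
        hT, Matrix.conjTranspose_mul, Matrix.conjTranspose_conjTranspose]
      rw [show (star t : ℂ) = (starRingEnd ℂ) t from rfl,
        show (star t⁻¹ : ℂ) = (starRingEnd ℂ) t⁻¹ from rfl, htconj, htconj']
    have hA1 : Aᴴ * F = A := by
      rw [hAH, Matrix.add_mul, Matrix.smul_mul, Matrix.smul_mul, Matrix.mul_assoc (Fᴴ) S F,
        hFSF lam hlam hconj n hn]
      rw [hA, hT]
      rw [add_comm]
    have hkey : S * (z • 1 - N0) = z • S + T := by
      rw [hN0, Matrix.mul_sub, Matrix.mul_neg, sub_neg_eq_add, Matrix.mul_smul,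
        Matrix.mul_one, ← Matrix.mul_assoc, Matrix.mul_nonsing_inv _ hSdet, Matrix.one_mul]
    have hdet1 : (z • S + T).det ≠ 0 := by
      rw [← hkey, Matrix.det_mul]
      apply mul_ne_zero (detS lam hlam n hn)
      rw [← _root_.eval_charpoly]
      exact hz2
    have h3 : t⁻¹ * t^2 = t := by
      rw [sq, ← mul_assoc, inv_mul_cancel₀ ht0, one_mul]
    have hAz : A = t⁻¹ • (z • S + T) := by
      rw [hA, smul_add, smul_smul, ← ht, h3]
    have hA2 : A.det ≠ 0 := by
      rw [hAz, Matrix.det_smul]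
      exact mul_ne_zero (pow_ne_zero _ (inv_ne_zero ht0)) hdet1
    refine ⟨A, isUnit_iff_ne_zero.mpr hA2, ?_⟩
    have hAHdet : IsUnit (Aᴴ).det := by
      rw [Matrix.det_conjTranspose]
      exact isUnit_iff_ne_zero.mpr (by simpa using hA2)
    symm
    calc (Aᴴ)⁻¹ * A = (Aᴴ)⁻¹ * (Aᴴ * F) := by rw [hA1]
      _ = F := by rw [← Matrix.mul_assoc, Matrix.nonsing_inv_mul _ hAHdet, Matrix.one_mul]
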